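/- The generalized Petersen graph GP(n,k), with 1 ≤ k < n/2, is a 3-RDR graph if and only if n ≡ 0 (mod 6) and k ≡ ±1 (mod 6). -/

import Mathlib

open SimpleGraph Finset

/-- A `k`-rainbow dominating function on a graph `G`: whenever `f v = ∅`,
every color appears on some neighbor of `v`. -/
def IsKRDF {V : Type*} (G : SimpleGraph V) (k : ℕ) (f : V → Finset (Fin k)) : Prop :=
  ∀ v, f v = ∅ → ∀ c : Fin k, ∃ u, G.Adj v u ∧ c ∈ f u

/-- The weight of a rainbow dominating function. -/
def rdfWeight {V : Type*} [Fintype V] {k : ℕ} (f : V → Finset (Fin k)) : ℕ :=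
  ∑ v, (f v).card

/-- The `k`-rainbow domination number of `G`. -/
noncomputable def rainbowDomNum {V : Type*} [Fintype V] (G : SimpleGraph V) (k : ℕ) : ℕ :=
  sInf {w | ∃ f, IsKRDF G k f ∧ rdfWeight f = w}

/-- The generalized Petersen graph `GP(n,k)`: outer vertices `Sum.inl i`, inner
vertices `Sum.inr i`, with outer edges, spokes and inner edges. -/
def GP (n k : ℕ) : SimpleGraph (ZMod n ⊕ ZMod n) where
  Adj x y := x ≠ y ∧
    (match x, y with
     | Sum.inl i, Sum.inl j => j = i + 1 ∨ i = j + 1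
     | Sum.inl i, Sum.inr j => i = j
     | Sum.inr i, Sum.inl j => i = j
     | Sum.inr i, Sum.inr j => j = i + (k : ZMod n) ∨ i = j + (k : ZMod n))
  symm := ⟨by
    rintro (i | i) (j | j) ⟨hne, h⟩ <;>
      refine ⟨hne.symm, ?_⟩ <;> simp only at h ⊢ <;> tauto⟩
  loopless := ⟨by rintro (i | i) ⟨hne, -⟩ <;> exact hne rfl⟩

open scoped Classical in
/-- A graph is `3`-RDR if it is cubic and its `3`-rainbow domination number equals
half the number of vertices. -/
def Is3RDR {V : Type*} [Fintype V] (X : SimpleGraph V) : Prop :=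
  X.IsRegularOfDegree 3 ∧ 2 * rainbowDomNum X 3 = Fintype.card V

/-! ### Auxiliary decision lemmas over `ZMod 3` and `Fin 3` -/

lemma Zmega : ∀ A0 A1 A2 B1 B2 : ZMod 3, A1 ≠ A0 → A2 ≠ A1 → B2 ≠ B1 →
    B1+A0+A1 ≠ 0 → B2+A1+A2 ≠ 0 → B2+A1+B1 ≠ 0 →
    (B2+A1+A2)*(A2-A1) = (B1+A0+A1)*(A1-A0) := by decide

lemma Z1 : ∀ P A0 A1 Q R : ZMod 3, P = A0+A1+Q+R → P + A0 + A1 = 0 → Q + R = A0 + A1 := by decide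
lemma Z2 : ∀ P A0 A1 Q R : ZMod 3, P = A0+A1+Q+R → R + P + Q = 0 → Q + R = A0 + A1 := by decide
lemma Z3 : ∀ x d K : ZMod 3, d ≠ 0 → x*d = K → x = K*d := by decide
lemma Z3' : ∀ K : ZMod 3, K ≠ 0 → K = 1 ∨ K = 2 := by decide
lemma Z4 : ∀ P A0 A1 : ZMod 3, P + A0 + A1 = 1*(A1 - A0) → P = A0 := by decide
lemma Z5 : ∀ A0 A1 Q R : ZMod 3, A0 = A0+A1+Q+R → R = A0 → R - Q = A1 - A0 := by decide
lemma Z6 : ∀ P A0 A1 : ZMod 3, P + A0 + A1 = 2*(A1 - A0) → P = A1 := by decide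
lemma Z7 : ∀ A0 A1 A2 : ZMod 3, A1 = A0 + A1 + A1 + A2 → A2 - A1 = A1 - A0 := by decide
lemma Zsum : ∀ x y z : Fin 3, x ≠ y → x ≠ z → y ≠ z →
    ((x:ℕ) : ZMod 3) + ((y:ℕ) : ZMod 3) + ((z:ℕ) : ZMod 3) = 0 := by decide
lemma Zne : ∀ x y : Fin 3, x ≠ y → ((x:ℕ) : ZMod 3) ≠ ((y:ℕ) : ZMod 3) := by decide
lemma fin3_distinct : ∀ x y z : Fin 3, (∀ c : Fin 3, c = x ∨ c = y ∨ c = z) →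
    x ≠ y ∧ x ≠ z ∧ y ≠ z := by decide

/-! ### The core sequence lemma -/

lemma CORE (m p : ℕ) (hm : 1 ≤ m) (a b : ℕ → ZMod 3)
    (hab : ∀ t, a (t+1) + a t + b t = 0)
    (hpa : ∀ t, a (t+1) ≠ a t)
    (hin : ∀ t, b (t+(2*p+1)) + b t + a (t+(p+1)) = 0)
    (hind : ∀ t, b (t+(2*p+1)) ≠ b t)
    (hpera : ∀ t, a (t + m) = a t) :
    3 ∣ m ∧ ¬ 3 ∣ (2*p+1) := by
  obtain ⟨m', rfl⟩ : ∃ m', m = m'+1 := ⟨m-1, by omega⟩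
  have hb : ∀ t, b t = - a (t+1) - a t := fun t => by linear_combination hab t
  have hin' : ∀ t, a (t+(p+1)) = a t + a (t+1) + a (t+(2*p+1)) + a (t+(2*p+2)) := by
    intro t
    have h1 := hin t
    have h2 := hb t
    have h3 := hb (t+(2*p+1))
    rw [show t+(2*p+1)+1 = t+(2*p+2) by omega] at h3
    linear_combination h1 - h2 - h3
  have hind' : ∀ t, a (t+(2*p+1)) + a (t+(2*p+2)) ≠ a t + a (t+1) := by
    intro t h
    apply hind t
    have h3 := hb (t+(2*p+1))
    rw [show t+(2*p+1)+1 = t+(2*p+2) by omega] at h3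
    rw [h3, hb t]
    linear_combination -h
  have hx : ∀ t, a (t+(p+1)) + a t + a (t+1) ≠ 0 := by
    intro t h
    exact hind' t (Z1 _ _ _ _ _ (hin' t) h)
  have hYs : ∀ t, a (t+(2*p+2)) + a (t+(p+1)) + a (t+(2*p+1)) ≠ 0 := by
    intro t h
    exact hind' t (Z2 _ _ _ _ _ (hin' t) (by linear_combination h))
  have hshift : ∀ t j, a (t + j*(m'+1)) = a t := by
    intro t j
    induction j with
    | zero => simp
    | succ j ih =>
      rw [show t + (j+1)*(m'+1) = (t + j*(m'+1)) + (m'+1) by ring, hpera, ih]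
  have hY : ∀ t, a (t+(p+2)) + a (t+1) + a (t+(p+1)) ≠ 0 := by
    intro t
    have H := hYs (t + p*m')
    rw [show t + p*m' + (2*p+2) = (t+(p+2)) + p*(m'+1) by ring,
        show t + p*m' + (p+1) = (t+1) + p*(m'+1) by ring,
        show t + p*m' + (2*p+1) = (t+(p+1)) + p*(m'+1) by ring,
        hshift, hshift, hshift] at H
    exact H
  have hstep : ∀ t, (a (t+(p+2)) + a (t+1) + a (t+2)) * (a (t+2) - a (t+1))
      = (a (t+(p+1)) + a t + a (t+1)) * (a (t+1) - a t) := by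
    intro t
    have e1 := hpa t
    have e2 := hpa (t+1); rw [show t+1+1 = t+2 by omega] at e2
    have e3 := hpa (t+(p+1)); rw [show t+(p+1)+1 = t+(p+2) by omega] at e3
    have e4 := hx t
    have e5 := hx (t+1)
    rw [show t+1+(p+1) = t+(p+2) by omega, show t+1+1 = t+2 by omega] at e5
    exact Zmega _ _ _ _ _ e1 e2 e3 e4 e5 (hY t)
  have hinv : ∀ t, (a (t+(p+1)) + a t + a (t+1)) * (a (t+1) - a t)
      = (a (p+1) + a 0 + a 1) * (a 1 - a 0) := by
    intro t
    induction t with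
    | zero => rw [show 0+(p+1) = p+1 by omega, show (0:ℕ)+1 = 1 by omega]
    | succ t ih =>
      rw [show t+1+(p+1) = t+(p+2) by omega, show t+1+1 = t+2 by omega, hstep t, ih]
  have hK : (a (p+1) + a 0 + a 1) * (a 1 - a 0) ≠ 0 := by
    have h0 := hx 0
    rw [show 0+(p+1) = p+1 by omega, show (0:ℕ)+1 = 1 by omega] at h0
    have h1 := hpa 0
    rw [show (0:ℕ)+1 = 1 by omega] at h1
    exact mul_ne_zero h0 (sub_ne_zero.2 h1)
  set K := (a (p+1) + a 0 + a 1) * (a 1 - a 0) with hKdef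
  have hxk : ∀ t, a (t+(p+1)) + a t + a (t+1) = K * (a (t+1) - a t) := by
    intro t
    exact Z3 _ _ _ (sub_ne_zero.2 (hpa t)) (hinv t)
  have hd1 : ∀ t, a (t+2) - a (t+1) = a (t+1) - a t := by
    rcases Z3' K hK with hK1 | hK2
    · have hper1 : ∀ t, a (t+(p+1)) = a t := by
        intro t
        exact Z4 _ _ _ (by rw [← hK1]; exact hxk t)
      have hB : ∀ t, a (t+(2*p+2)) - a (t+(2*p+1)) = a (t+1) - a t := by
        intro t
        have hR : a (t+(2*p+2)) = a t := by
          have := hper1 (t+(p+1))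
          rw [show t+(p+1)+(p+1) = t+(2*p+2) by omega, hper1 t] at this
          exact this
        have := hin' t
        rw [hper1 t] at this
        exact Z5 _ _ _ _ this hR
      have hA : ∀ t, a (t+(p+2)) - a (t+(p+1)) = a (t+1) - a t := by
        intro t
        have h1 := hper1 (t+1); rw [show t+1+(p+1) = t+(p+2) by omega] at h1
        rw [h1, hper1 t]
      intro t
      have hB1 := hB (t+1)
      rw [show t+1+(2*p+2) = t+(2*p+3) by omega, show t+1+(2*p+1) = t+(2*p+2) by omega] at hB1
      rw [show t+1+1 = t+2 by omega] at hB1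
      have hA1 := hA (t+(p+1))
      rw [show t+(p+1)+(p+2) = t+(2*p+3) by omega, show t+(p+1)+(p+1) = t+(2*p+2) by omega,
        show t+(p+1)+1 = t+(p+2) by omega] at hA1
      rw [hB1] at hA1
      rw [hA1]; exact hA t
    · have hper1 : ∀ t, a (t+(p+1)) = a (t+1) := by
        intro t
        exact Z6 _ _ _ (by rw [← hK2]; exact hxk t)
      intro t
      have h1 := hin' t
      have e1 : a (t+(2*p+1)) = a (t+1) := by
        have := hper1 (t+p)
        rw [show t+p+(p+1) = t+(2*p+1) by omega, show t+p+1 = t+(p+1) by omega] at this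
        rw [this, hper1 t]
      have e2 : a (t+(2*p+2)) = a (t+2) := by
        have ha := hper1 (t+(p+1))
        rw [show t+(p+1)+(p+1) = t+(2*p+2) by omega, show t+(p+1)+1 = t+(p+2) by omega] at ha
        have hb2 := hper1 (t+1)
        rw [show t+1+(p+1) = t+(p+2) by omega, show t+1+1 = t+2 by omega] at hb2
        rw [ha, hb2]
      rw [hper1 t, e1, e2] at h1
      exact Z7 _ _ _ h1
  have hdconst : ∀ t, a (t+1) - a t = a 1 - a 0 := by
    intro t
    induction t with
    | zero => rw [show (0:ℕ)+1 = 1 by omega]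
    | succ t ih =>
      have := hd1 t
      rw [show t+1+1 = t+2 by omega]
      rw [this, ih]
  have haff : ∀ t, a t = a 0 + (t : ZMod 3) * (a 1 - a 0) := by
    intro t
    induction t with
    | zero => simp
    | succ t ih =>
      have h := hdconst t
      push_cast
      linear_combination h + ih
  have hdm : ((m'+1 : ℕ) : ZMod 3) * (a 1 - a 0) = 0 := by
    have h := hpera 0
    rw [show (0:ℕ) + (m'+1) = m'+1 by omega] at h
    have h2 := haff (m'+1)
    rw [h] at h2
    linear_combination -h2
  have hdelta : a 1 - a 0 ≠ 0 := by
    have h1 := hpa 0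
    rw [show (0:ℕ)+1 = 1 by omega] at h1
    exact sub_ne_zero.2 h1
  constructor
  · have : ((m'+1 : ℕ) : ZMod 3) = 0 := by
      rcases mul_eq_zero.1 hdm with h | h
      · exact h
      · exact absurd h hdelta
    exact (ZMod.natCast_eq_zero_iff _ _).1 this
  · intro h3
    have hc : ((2*p+1 : ℕ) : ZMod 3) = 0 := (ZMod.natCast_eq_zero_iff _ _).2 h3
    apply hind' 0
    rw [show (0:ℕ)+(2*p+1) = 2*p+1 by omega, show (0:ℕ)+(2*p+2) = 2*p+2 by omega,
      show (0:ℕ)+1 = 1 by omega]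
    rw [haff (2*p+1), haff (2*p+2), haff 1]
    push_cast at hc ⊢
    linear_combination (2*(a 1 - a 0)) * hc

/-! ### Adjacency in `GP n k` -/

open scoped Classical

variable {n k : ℕ}

lemma GP_adj_lr {i j : ZMod n} :
    (GP n k).Adj (Sum.inl i) (Sum.inr j) ↔ i = j := by
  constructor
  · rintro ⟨-, h⟩; exact h
  · rintro rfl; exact ⟨by simp, rfl⟩

lemma GP_adj_rl {i j : ZMod n} :
    (GP n k).Adj (Sum.inr i) (Sum.inl j) ↔ i = j := by
  constructor
  · rintro ⟨-, h⟩; exact h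
  · rintro rfl; exact ⟨by simp, rfl⟩

lemma GP_adj_ll {i j : ZMod n} (h1 : (1:ZMod n) ≠ 0) :
    (GP n k).Adj (Sum.inl i) (Sum.inl j) ↔ (j = i + 1 ∨ j = i - 1) := by
  constructor
  · rintro ⟨-, h | h⟩
    · exact Or.inl h
    · exact Or.inr (by rw [h]; ring)
  · rintro (rfl | rfl)
    · exact ⟨fun hh => h1 (by linear_combination -(Sum.inl.inj hh)), Or.inl rfl⟩
    · exact ⟨fun hh => h1 (by linear_combination (Sum.inl.inj hh)), Or.inr (by ring)⟩

lemma GP_adj_rr {i j : ZMod n} (hk : (k:ZMod n) ≠ 0) :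
    (GP n k).Adj (Sum.inr i) (Sum.inr j) ↔ (j = i + k ∨ j = i - k) := by
  constructor
  · rintro ⟨-, h | h⟩
    · exact Or.inl h
    · exact Or.inr (by rw [h]; ring)
  · rintro (rfl | rfl)
    · exact ⟨fun hh => hk (by linear_combination -(Sum.inr.inj hh)), Or.inl rfl⟩
    · exact ⟨fun hh => hk (by linear_combination (Sum.inr.inj hh)), Or.inr (by ring)⟩

section GPbasic
variable [NeZero n] (hk1 : 1 ≤ k) (hk2 : 2 * k < n)

omit [NeZero n] in
lemma GP_cast_ne_zero [NeZero n] (a : ℕ) (ha : 0 < a) (han : a < n) : (a : ZMod n) ≠ 0 := by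
  rw [Ne, ZMod.natCast_eq_zero_iff]
  exact fun h => absurd (Nat.le_of_dvd ha h) (not_le.2 han)

include hk1 hk2

lemma GP_one_ne : (1 : ZMod n) ≠ 0 := by
  have := GP_cast_ne_zero (n := n) 1 one_pos (by omega); simpa using this

lemma GP_two_ne : (2 : ZMod n) ≠ 0 := by
  have := GP_cast_ne_zero (n := n) 2 two_pos (by omega); simpa using this

lemma GP_k_ne : (k : ZMod n) ≠ 0 := GP_cast_ne_zero k hk1 (by omega)

lemma GP_kk_ne : ((k : ZMod n) + k) ≠ 0 := by
  have := GP_cast_ne_zero (n := n) (2*k) (by omega) hk2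
  push_cast at this
  rwa [two_mul] at this

lemma nbrFinset_l (i : ZMod n) :
    (GP n k).neighborFinset (Sum.inl i) = {Sum.inl (i+1), Sum.inl (i-1), Sum.inr i} := by
  have h1 : (1:ZMod n) ≠ 0 := GP_one_ne hk1 hk2
  ext u
  rcases u with j | j <;>
      simp only [mem_neighborFinset, GP_adj_ll h1, GP_adj_lr, Finset.mem_insert,
        Finset.mem_singleton, Sum.inl.injEq, Sum.inr.injEq] <;>
    constructor
  · tauto
  · rintro (h | h | h) <;> first | tauto | exact absurd h (by simp)
  · rintro rfl; tauto
  · rintro (h | h | h) <;> first | exact (Sum.inr_ne_inl h).elim | exact h.symm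

lemma nbrFinset_r (i : ZMod n) :
    (GP n k).neighborFinset (Sum.inr i) = {Sum.inr (i+k), Sum.inr (i-k), Sum.inl i} := by
  have hk : (k:ZMod n) ≠ 0 := GP_k_ne hk1 hk2
  ext u
  rcases u with j | j <;>
      simp only [mem_neighborFinset, GP_adj_rr hk, GP_adj_rl, Finset.mem_insert,
        Finset.mem_singleton, Sum.inl.injEq, Sum.inr.injEq] <;>
    constructor
  · rintro rfl; tauto
  · rintro (h | h | h) <;> first | exact (Sum.inl_ne_inr h).elim | exact h.symm
  · tauto
  · rintro (h | h | h) <;> first | tauto | exact absurd h (by simp)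

lemma GP_cubic : (GP n k).IsRegularOfDegree 3 := by
  intro v
  rw [SimpleGraph.degree]
  rcases v with i | i
  · rw [nbrFinset_l hk1 hk2]
    have h2 : (2:ZMod n) ≠ 0 := GP_two_ne hk1 hk2
    have hd : (Sum.inl (i+1) : ZMod n ⊕ ZMod n) ≠ Sum.inl (i-1) :=
      fun h => h2 (by linear_combination (Sum.inl.inj h))
    rw [Finset.card_insert_of_notMem (by simp [hd]), Finset.card_insert_of_notMem (by simp),
      Finset.card_singleton]
  · rw [nbrFinset_r hk1 hk2]
    have h2 : ((k:ZMod n) + k) ≠ 0 := GP_kk_ne hk1 hk2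
    have hd : (Sum.inr (i+k) : ZMod n ⊕ ZMod n) ≠ Sum.inr (i-k) :=
      fun h => h2 (by linear_combination (Sum.inr.inj h))
    rw [Finset.card_insert_of_notMem (by simp [hd]), Finset.card_insert_of_notMem (by simp),
      Finset.card_singleton]

end GPbasic

/-! ### Counting lemmas -/

section Counting
variable {V : Type*} [Fintype V] {G : SimpleGraph V}

lemma handshake (G : SimpleGraph V) (g : V → ℕ) :
    ∑ v : V, ∑ u ∈ G.neighborFinset v, g u = ∑ u : V, G.degree u * g u := by
  have h1 : ∀ v : V, ∑ u ∈ G.neighborFinset v, g u = ∑ u : V, if G.Adj v u then g u else 0 := by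
    intro v; rw [neighborFinset_eq_filter, sum_filter]
  simp_rw [h1]
  rw [Finset.sum_comm]
  refine Finset.sum_congr rfl fun u _ => ?_
  have h2 : ∀ v : V, (if G.Adj v u then g u else 0) = (if v ∈ univ.filter (G.Adj u) then g u else 0) := by
    intro v; simp [G.adj_comm]
  simp_rw [h2]
  rw [Finset.sum_ite_mem, univ_inter, Finset.sum_const, degree, neighborFinset_eq_filter,
    smul_eq_mul]

noncomputable def innS (G : SimpleGraph V) (f : V → Finset (Fin 3)) (v : V) : ℕ :=
  ∑ u ∈ G.neighborFinset v, (f u).card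

variable (hreg : G.IsRegularOfDegree 3) {f : V → Finset (Fin 3)} (hf : IsKRDF G 3 f)

include hf in
lemma key1 : ∀ v, f v = ∅ → 3 ≤ innS G f v := by
  intro v hv
  have hsub : (univ : Finset (Fin 3)) ⊆ (G.neighborFinset v).biUnion f := by
    intro c _
    obtain ⟨u, hu, hc⟩ := hf v hv c
    exact Finset.mem_biUnion.2 ⟨u, by rwa [mem_neighborFinset], hc⟩
  calc (3:ℕ) = (univ : Finset (Fin 3)).card := by simp
    _ ≤ ((G.neighborFinset v).biUnion f).card := Finset.card_le_card hsub
    _ ≤ ∑ u ∈ G.neighborFinset v, (f u).card := Finset.card_biUnion_le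

include hreg in
lemma key2 : ∑ v : V, innS G f v = 3 * rdfWeight f := by
  unfold innS rdfWeight
  rw [handshake, Finset.mul_sum]
  exact Finset.sum_congr rfl fun u _ => by rw [hreg u]

include hreg hf in
lemma rdf_lower : Fintype.card V ≤ 2 * rdfWeight f := by
  classical
  set E := univ.filter (fun v => f v = ∅) with hE
  have hcomp : E.card + (univ.filter (fun v => ¬ f v = ∅)).card = Fintype.card V := by
    rw [hE, Finset.card_filter_add_card_filter_not]; rfl
  have h3 : (univ.filter (fun v => ¬ f v = ∅)).card ≤ rdfWeight f := by
    unfold rdfWeight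
    calc (univ.filter (fun v => ¬ f v = ∅)).card
        = ∑ v ∈ univ.filter (fun v => ¬ f v = ∅), 1 := by rw [Finset.sum_const, smul_eq_mul, mul_one]
      _ ≤ ∑ v ∈ univ.filter (fun v => ¬ f v = ∅), (f v).card := by
          refine Finset.sum_le_sum fun v hv => ?_
          have := (Finset.mem_filter.1 hv).2
          exact Nat.one_le_iff_ne_zero.2 (by simpa [Finset.card_eq_zero] using this)
      _ ≤ ∑ v : V, (f v).card := Finset.sum_le_sum_of_subset (Finset.filter_subset _ _)
  have h4 : 3 * E.card ≤ 3 * rdfWeight f := by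
    calc 3 * E.card = ∑ _v ∈ E, 3 := by rw [Finset.sum_const, smul_eq_mul, mul_comm]
      _ ≤ ∑ v ∈ E, innS G f v :=
          Finset.sum_le_sum fun v hv => key1 hf v (Finset.mem_filter.1 hv).2
      _ ≤ ∑ v : V, innS G f v := Finset.sum_le_sum_of_subset (Finset.filter_subset _ _)
      _ = 3 * rdfWeight f := key2 hreg
  omega

include hreg hf in
lemma rdf_eq_struct (heq : 2 * rdfWeight f = Fintype.card V) :
    (∀ v, (f v).card ≤ 1) ∧ (∀ v u, f v ≠ ∅ → G.Adj v u → f u = ∅) ∧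
    (∀ v, f v = ∅ → innS G f v = 3) := by
  classical
  set w := rdfWeight f with hw
  set E := univ.filter (fun v => f v = ∅) with hE
  set C := univ.filter (fun v => ¬ f v = ∅) with hC
  have hcomp : E.card + C.card = Fintype.card V := by
    rw [hE, hC, Finset.card_filter_add_card_filter_not]; rfl
  have hCle : C.card ≤ ∑ v ∈ C, (f v).card := by
    calc C.card = ∑ v ∈ C, 1 := by rw [Finset.sum_const, smul_eq_mul, mul_one]
      _ ≤ _ := Finset.sum_le_sum fun v hv => Nat.one_le_iff_ne_zero.2
          (by simpa [Finset.card_eq_zero] using (Finset.mem_filter.1 hv).2)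
  have hsplit : ∑ v ∈ C, (f v).card = w := by
    rw [hw]; unfold rdfWeight
    rw [← Finset.sum_filter_add_sum_filter_not univ (fun v => f v = ∅) (fun v => (f v).card)]
    have : ∑ v ∈ E, (f v).card = 0 := by
      refine Finset.sum_eq_zero fun v hv => ?_
      rw [(Finset.mem_filter.1 hv).2]; rfl
    rw [← hE, ← hC, this, zero_add]
  have h4 : 3 * E.card ≤ ∑ v ∈ E, innS G f v := by
    calc 3 * E.card = ∑ _v ∈ E, 3 := by rw [Finset.sum_const, smul_eq_mul, mul_comm]
      _ ≤ _ := Finset.sum_le_sum fun v hv => key1 hf v (Finset.mem_filter.1 hv).2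
  have h5 : ∑ v ∈ E, innS G f v + ∑ v ∈ C, innS G f v = 3 * w := by
    rw [← key2 (f := f) hreg,
      ← Finset.sum_filter_add_sum_filter_not univ (fun v => f v = ∅) (fun v => innS G f v)]
  have hCcard : C.card = w := le_antisymm (hCle.trans (le_of_eq hsplit)) (by omega)
  have hEcard : E.card = w := by omega
  have hone : ∀ v, ¬ f v = ∅ → (f v).card = 1 := by
    by_contra hcon
    push_neg at hcon
    obtain ⟨v₀, hv₀ne, hv₀⟩ := hcon
    have hv₀C : v₀ ∈ C := Finset.mem_filter.2 ⟨Finset.mem_univ _, Finset.nonempty_iff_ne_empty.1 hv₀ne⟩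
    have : ∑ v ∈ C, 1 < ∑ v ∈ C, (f v).card := by
      refine Finset.sum_lt_sum (fun v hv => Nat.one_le_iff_ne_zero.2
        (by simpa [Finset.card_eq_zero] using (Finset.mem_filter.1 hv).2)) ⟨v₀, hv₀C, ?_⟩
      have h1 : 1 ≤ (f v₀).card := Nat.one_le_iff_ne_zero.2
        (by simpa [Finset.card_eq_zero] using Finset.nonempty_iff_ne_empty.1 hv₀ne)
      omega
    rw [Finset.sum_const, smul_eq_mul, mul_one, hsplit, hCcard] at this
    omega
  have hEsum : ∑ v ∈ E, innS G f v = 3 * w := by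
    have := h4; rw [hEcard] at this; omega
  have hCzero : ∀ v, ¬ f v = ∅ → innS G f v = 0 := by
    have hCS : ∑ v ∈ C, innS G f v = 0 := by omega
    intro v hv
    exact Finset.sum_eq_zero_iff.1 hCS v (Finset.mem_filter.2 ⟨Finset.mem_univ _, hv⟩)
  have hE3 : ∀ v, f v = ∅ → innS G f v = 3 := by
    by_contra hcon
    push_neg at hcon
    obtain ⟨v₀, hv₀e, hv₀⟩ := hcon
    have hv₀E : v₀ ∈ E := Finset.mem_filter.2 ⟨Finset.mem_univ _, hv₀e⟩
    have : ∑ v ∈ E, 3 < ∑ v ∈ E, innS G f v := by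
      refine Finset.sum_lt_sum (fun v hv => key1 hf v (Finset.mem_filter.1 hv).2) ⟨v₀, hv₀E, ?_⟩
      have := key1 hf v₀ hv₀e
      omega
    rw [Finset.sum_const, smul_eq_mul, hEsum, hEcard] at this
    omega
  refine ⟨fun v => ?_, fun v u hv hadj => ?_, hE3⟩
  · by_cases hv : f v = ∅
    · simp [hv]
    · exact le_of_eq (hone v hv)
  · have h0 := hCzero v hv
    unfold innS at h0
    have := Finset.sum_eq_zero_iff.1 h0 u (by rwa [mem_neighborFinset])
    simpa [Finset.card_eq_zero] using this

lemma triple_struct [DecidableEq V] {f : V → Finset (Fin 3)} (hf : IsKRDF G 3 f) (hcard1 : ∀ v, (f v).card ≤ 1)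
    (v a b c : V) (hv : f v = ∅)
    (hnbr : G.neighborFinset v = {a, b, c}) (hab : a ≠ b) (hac : a ≠ c) (hbc : b ≠ c)
    (hS : innS G f v = 3) :
    ∃ x y z : Fin 3, f a = {x} ∧ f b = {y} ∧ f c = {z} ∧ x ≠ y ∧ x ≠ z ∧ y ≠ z := by
  unfold innS at hS
  rw [hnbr, Finset.sum_insert (by simp [hab, hac]), Finset.sum_insert (by simp [hbc]),
    Finset.sum_singleton] at hS
  have ha1 : (f a).card = 1 := by have := hcard1 a; have := hcard1 b; have := hcard1 c; omega
  have hb1 : (f b).card = 1 := by have := hcard1 a; have := hcard1 b; have := hcard1 c; omega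
  have hc1 : (f c).card = 1 := by have := hcard1 a; have := hcard1 b; have := hcard1 c; omega
  obtain ⟨x, hx⟩ := Finset.card_eq_one.1 ha1
  obtain ⟨y, hy⟩ := Finset.card_eq_one.1 hb1
  obtain ⟨z, hz⟩ := Finset.card_eq_one.1 hc1
  have hcover : ∀ cc : Fin 3, cc = x ∨ cc = y ∨ cc = z := by
    intro cc
    obtain ⟨u, hu, hcc⟩ := hf v hv cc
    have hu3 : u ∈ ({a, b, c} : Finset V) := by
      rw [← hnbr]; exact (SimpleGraph.mem_neighborFinset _ _ _).2 hu
    simp only [Finset.mem_insert, Finset.mem_singleton] at hu3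
    rcases hu3 with rfl | rfl | rfl
    · rw [hx] at hcc; exact Or.inl (Finset.mem_singleton.1 hcc)
    · rw [hy] at hcc; exact Or.inr (Or.inl (Finset.mem_singleton.1 hcc))
    · rw [hz] at hcc; exact Or.inr (Or.inr (Finset.mem_singleton.1 hcc))
  obtain ⟨h1, h2, h3⟩ := fin3_distinct x y z hcover
  exact ⟨x, y, z, hx, hy, hz, h1, h2, h3⟩

end Counting

/-! ### The color function -/

noncomputable def colOf {V : Type*} (f : V → Finset (Fin 3)) (v : V) : ZMod 3 :=
  ∑ c ∈ f v, ((c : ℕ) : ZMod 3)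

lemma colOf_single {V : Type*} {f : V → Finset (Fin 3)} {v : V} {x : Fin 3} (h : f v = {x}) :
    colOf f v = ((x : ℕ) : ZMod 3) := by
  unfold colOf; rw [h, Finset.sum_singleton]

/-! ### The parity function -/

noncomputable def epsOf {V : Type*} (f : V → Finset (Fin 3)) (v : V) : ZMod 2 :=
  if f v = ∅ then 0 else 1

lemma epsOf_eq_zero_iff {V : Type*} {f : V → Finset (Fin 3)} {v : V} :
    epsOf f v = 0 ↔ f v = ∅ := by
  unfold epsOf
  by_cases h : f v = ∅
  · simp [h]
  · simp only [if_neg h]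
    constructor
    · intro h1; exact absurd h1 (by decide)
    · intro h1; exact absurd h1 h

/-! ### Necessity -/

section Necessity
variable [NeZero n] (hk1 : 1 ≤ k) (hk2 : 2 * k < n)

include hk1 hk2 in
lemma GP_necessity {f : (ZMod n ⊕ ZMod n) → Finset (Fin 3)} (hf : IsKRDF (GP n k) 3 f)
    (hw : 2 * rdfWeight f = Fintype.card (ZMod n ⊕ ZMod n)) :
    n % 6 = 0 ∧ (k % 6 = 1 ∨ k % 6 = 5) := by
  obtain ⟨hcard1, hcolored, hS3⟩ := rdf_eq_struct (GP_cubic hk1 hk2) hf hw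
  have hone : (1 : ZMod n) ≠ 0 := GP_one_ne hk1 hk2
  have hkne : (k : ZMod n) ≠ 0 := GP_k_ne hk1 hk2
  have htwo : (2 : ZMod n) ≠ 0 := GP_two_ne hk1 hk2
  have hkk : ((k:ZMod n) + k) ≠ 0 := GP_kk_ne hk1 hk2
  have hOstr : ∀ i : ZMod n, f (Sum.inl i) = ∅ →
      (f (Sum.inl (i+1)) ≠ ∅ ∧ f (Sum.inl (i-1)) ≠ ∅ ∧ f (Sum.inr i) ≠ ∅) ∧
      colOf f (Sum.inl (i+1)) + colOf f (Sum.inl (i-1)) + colOf f (Sum.inr i) = 0 ∧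
      colOf f (Sum.inl (i+1)) ≠ colOf f (Sum.inl (i-1)) := by
    intro i hv
    obtain ⟨x, y, z, hx, hy, hz, hxy, hxz, hyz⟩ := triple_struct hf hcard1 (Sum.inl i)
      (Sum.inl (i+1)) (Sum.inl (i-1)) (Sum.inr i) hv (nbrFinset_l hk1 hk2 i)
      (fun h => htwo (by linear_combination (Sum.inl.inj h))) (by simp) (by simp)
      (hS3 _ hv)
    refine ⟨⟨by simp [hx], by simp [hy], by simp [hz]⟩, ?_, ?_⟩
    · rw [colOf_single hx, colOf_single hy, colOf_single hz]
      exact Zsum x y z hxy hxz hyz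
    · rw [colOf_single hx, colOf_single hy]
      exact Zne x y hxy
  have hIstr : ∀ i : ZMod n, f (Sum.inr i) = ∅ →
      (f (Sum.inr (i+k)) ≠ ∅ ∧ f (Sum.inr (i-k)) ≠ ∅ ∧ f (Sum.inl i) ≠ ∅) ∧
      colOf f (Sum.inr (i+k)) + colOf f (Sum.inr (i-k)) + colOf f (Sum.inl i) = 0 ∧
      colOf f (Sum.inr (i+k)) ≠ colOf f (Sum.inr (i-k)) := by
    intro i hv
    obtain ⟨x, y, z, hx, hy, hz, hxy, hxz, hyz⟩ := triple_struct hf hcard1 (Sum.inr i)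
      (Sum.inr (i+k)) (Sum.inr (i-k)) (Sum.inl i) hv (nbrFinset_r hk1 hk2 i)
      (fun h => hkk (by linear_combination (Sum.inr.inj h))) (by simp) (by simp)
      (hS3 _ hv)
    refine ⟨⟨by simp [hx], by simp [hy], by simp [hz]⟩, ?_, ?_⟩
    · rw [colOf_single hx, colOf_single hy, colOf_single hz]
      exact Zsum x y z hxy hxz hyz
    · rw [colOf_single hx, colOf_single hy]
      exact Zne x y hxy
  have hempty_nbrs : ∀ v u, f v = ∅ → (GP n k).Adj v u → f u ≠ ∅ := by
    intro v u hv hadj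
    rcases v with i | i
    · have h := (hOstr i hv).1
      have hu : u ∈ ({Sum.inl (i+1), Sum.inl (i-1), Sum.inr i} : Finset (ZMod n ⊕ ZMod n)) := by
        rw [← nbrFinset_l hk1 hk2]; exact (SimpleGraph.mem_neighborFinset _ _ _).2 hadj
      simp only [Finset.mem_insert, Finset.mem_singleton] at hu
      rcases hu with rfl | rfl | rfl
      · exact h.1
      · exact h.2.1
      · exact h.2.2
    · have h := (hIstr i hv).1
      have hu : u ∈ ({Sum.inr (i+k), Sum.inr (i-k), Sum.inl i} : Finset (ZMod n ⊕ ZMod n)) := by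
        rw [← nbrFinset_r hk1 hk2]; exact (SimpleGraph.mem_neighborFinset _ _ _).2 hadj
      simp only [Finset.mem_insert, Finset.mem_singleton] at hu
      rcases hu with rfl | rfl | rfl
      · exact h.1
      · exact h.2.1
      · exact h.2.2
  have hstepε : ∀ v u, (GP n k).Adj v u → epsOf f u = epsOf f v + 1 := by
    intro v u h
    by_cases hv : f v = ∅
    · have hu := hempty_nbrs v u hv h
      unfold epsOf
      rw [if_pos hv, if_neg hu]
      decide
    · have hu : f u = ∅ := hcolored v u hv h
      unfold epsOf
      rw [if_neg hv, if_pos hu]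
      decide
  have houtε : ∀ j : ℕ, epsOf f (Sum.inl ((j : ℕ) : ZMod n))
      = epsOf f (Sum.inl (0 : ZMod n)) + (j : ZMod 2) := by
    intro j
    induction j with
    | zero => simp
    | succ j ih =>
      have hadj : (GP n k).Adj (Sum.inl ((j:ℕ) : ZMod n)) (Sum.inl (((j:ℕ) : ZMod n) + 1)) :=
        (GP_adj_ll hone).2 (Or.inl rfl)
      have hst := hstepε _ _ hadj
      rw [show (((j+1:ℕ)) : ZMod n) = ((j:ℕ) : ZMod n) + 1 by push_cast; ring, hst, ih]
      push_cast
      ring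
  have hneven : 2 ∣ n := by
    have h := houtε n
    rw [ZMod.natCast_self] at h
    exact (ZMod.natCast_eq_zero_iff _ _).1 (left_eq_add.1 h)
  have hIε : ∀ j : ℕ, epsOf f (Sum.inr ((j:ℕ) : ZMod n))
      = epsOf f (Sum.inl (0 : ZMod n)) + (j : ZMod 2) + 1 := by
    intro j
    have hadj : (GP n k).Adj (Sum.inl ((j:ℕ) : ZMod n)) (Sum.inr ((j:ℕ) : ZMod n)) :=
      GP_adj_lr.2 rfl
    rw [hstepε _ _ hadj, houtε j]
  have hkodd : ¬ 2 ∣ k := by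
    have hadj : (GP n k).Adj (Sum.inr (((0:ℕ)) : ZMod n))
        (Sum.inr ((((0:ℕ)) : ZMod n) + (k : ZMod n))) := (GP_adj_rr hkne).2 (Or.inl rfl)
    have h := hstepε _ _ hadj
    rw [show (((0:ℕ) : ZMod n) + (k : ZMod n)) = ((k:ℕ) : ZMod n) by push_cast; ring] at h
    rw [hIε k, hIε 0] at h
    have hk2' : ((k:ℕ) : ZMod 2) = 1 := by push_cast at h ⊢; linear_combination h
    intro hdvd
    have := (ZMod.natCast_eq_zero_iff k 2).2 hdvd
    rw [this] at hk2'
    exact absurd hk2' (by decide)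
  obtain ⟨m, hnm⟩ := hneven
  have hkodd' : k % 2 = 1 := by omega
  obtain ⟨p, hkp⟩ : ∃ p, k = 2*p+1 := ⟨k/2, by omega⟩
  have hm1 : 1 ≤ m := by omega
  obtain ⟨s₀, hs₀⟩ : ∃ s : ℕ, f (Sum.inl ((s:ℕ) : ZMod n)) ≠ ∅ := by
    by_cases h0 : f (Sum.inl (0:ZMod n)) = ∅
    · refine ⟨1, ?_⟩
      have h := (hOstr 0 h0).1.1
      rwa [show ((1:ℕ) : ZMod n) = (0:ZMod n) + 1 by push_cast; ring]
    · exact ⟨0, by rwa [Nat.cast_zero]⟩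
  have hOpar : ∀ j j' : ℕ, j % 2 = j' % 2 →
      (f (Sum.inl ((j:ℕ) : ZMod n)) = ∅ ↔ f (Sum.inl ((j':ℕ) : ZMod n)) = ∅) := by
    intro j j' hpar
    rw [← epsOf_eq_zero_iff, ← epsOf_eq_zero_iff, houtε j, houtε j']
    have hcast : (j : ZMod 2) = (j' : ZMod 2) := by
      rw [← ZMod.natCast_mod j 2, ← ZMod.natCast_mod j' 2, hpar]
    rw [hcast]
  have hIpar : ∀ j j' : ℕ, j % 2 = j' % 2 →
      (f (Sum.inr ((j:ℕ) : ZMod n)) = ∅ ↔ f (Sum.inr ((j':ℕ) : ZMod n)) = ∅) := by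
    intro j j' hpar
    rw [← epsOf_eq_zero_iff, ← epsOf_eq_zero_iff, hIε j, hIε j']
    have hcast : (j : ZMod 2) = (j' : ZMod 2) := by
      rw [← ZMod.natCast_mod j 2, ← ZMod.natCast_mod j' 2, hpar]
    rw [hcast]
  have hempOodd : ∀ t : ℕ, f (Sum.inl (((s₀ + 2*t + 1 : ℕ)) : ZMod n)) = ∅ := by
    have hadj : (GP n k).Adj (Sum.inl ((s₀:ℕ) : ZMod n)) (Sum.inl (((s₀:ℕ) : ZMod n) + 1)) :=
      (GP_adj_ll hone).2 (Or.inl rfl)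
    have h1 := hcolored _ _ hs₀ hadj
    rw [show ((s₀:ℕ) : ZMod n) + 1 = ((s₀+1 : ℕ) : ZMod n) by push_cast; ring] at h1
    exact fun t => (hOpar _ _ (by omega)).2 h1
  have hempI : ∀ t : ℕ, f (Sum.inr (((s₀ + 2*t : ℕ)) : ZMod n)) = ∅ := by
    have h1 : f (Sum.inr ((s₀:ℕ) : ZMod n)) = ∅ := hcolored _ _ hs₀ (GP_adj_lr.2 rfl)
    exact fun t => (hIpar _ _ (by omega)).2 h1
  -- the sequence conditions
  have habpa : ∀ t : ℕ,
      colOf f (Sum.inl ((s₀ + 2*(t+1) : ℕ) : ZMod n)) + colOf f (Sum.inl ((s₀ + 2*t : ℕ) : ZMod n))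
        + colOf f (Sum.inr ((s₀ + 2*t + 1 : ℕ) : ZMod n)) = 0 ∧
      colOf f (Sum.inl ((s₀ + 2*(t+1) : ℕ) : ZMod n)) ≠ colOf f (Sum.inl ((s₀ + 2*t : ℕ) : ZMod n)) := by
    intro t
    have h := hOstr _ (hempOodd t)
    rw [show ((s₀+2*t+1 : ℕ) : ZMod n) + 1 = ((s₀+2*(t+1) : ℕ) : ZMod n) by push_cast; ring,
        show ((s₀+2*t+1 : ℕ) : ZMod n) - 1 = ((s₀+2*t : ℕ) : ZMod n) by push_cast; ring] at h
    exact ⟨h.2.1, h.2.2⟩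
  have hinind : ∀ t : ℕ,
      colOf f (Sum.inr ((s₀ + 2*(t+(2*p+1)) + 1 : ℕ) : ZMod n))
        + colOf f (Sum.inr ((s₀ + 2*t + 1 : ℕ) : ZMod n))
        + colOf f (Sum.inl ((s₀ + 2*(t+(p+1)) : ℕ) : ZMod n)) = 0 ∧
      colOf f (Sum.inr ((s₀ + 2*(t+(2*p+1)) + 1 : ℕ) : ZMod n))
        ≠ colOf f (Sum.inr ((s₀ + 2*t + 1 : ℕ) : ZMod n)) := by
    intro t
    have h := hIstr _ (hempI (t+(p+1)))
    rw [show ((s₀+2*(t+(p+1)) : ℕ) : ZMod n) + (k : ZMod n)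
          = ((s₀ + 2*(t+(2*p+1)) + 1 : ℕ) : ZMod n) by rw [hkp]; push_cast; ring,
        show ((s₀+2*(t+(p+1)) : ℕ) : ZMod n) - (k : ZMod n)
          = ((s₀ + 2*t + 1 : ℕ) : ZMod n) by
            rw [hkp, show ((2*p+1 : ℕ) : ZMod n) = ((2*p+1 : ℕ) : ZMod n) from rfl,
              ← Nat.cast_sub (by omega)]
            congr 1
            omega] at h
    exact ⟨h.2.1, h.2.2⟩
  have hpera : ∀ t : ℕ, colOf f (Sum.inl ((s₀ + 2*(t+m) : ℕ) : ZMod n))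
      = colOf f (Sum.inl ((s₀ + 2*t : ℕ) : ZMod n)) := by
    intro t
    rw [show (s₀ + 2*(t+m) : ℕ) = (s₀ + 2*t) + n by omega, Nat.cast_add, ZMod.natCast_self,
      add_zero]
  obtain ⟨h3m, h3k⟩ := CORE m p hm1
    (fun t => colOf f (Sum.inl ((s₀ + 2*t : ℕ) : ZMod n)))
    (fun t => colOf f (Sum.inr ((s₀ + 2*t + 1 : ℕ) : ZMod n)))
    (fun t => (habpa t).1) (fun t => (habpa t).2)
    (fun t => (hinind t).1) (fun t => (hinind t).2) hpera
  constructor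
  · omega
  · omega

end Necessity

/-! ### Sufficiency -/

def patO : ZMod 6 → Finset (Fin 3) := fun z =>
  if z = 0 then {0} else if z = 2 then {1} else if z = 4 then {2} else ∅
def patI : ZMod 6 → Finset (Fin 3) := fun z =>
  if z = 1 then {2} else if z = 3 then {0} else if z = 5 then {1} else ∅

lemma DEC1 : ∀ z : ZMod 6, ∀ c : Fin 3, patO z = ∅ →
    (c ∈ patO (z+1) ∨ c ∈ patO (z-1) ∨ c ∈ patI z) := by decide
lemma DEC2 : ∀ z κ : ZMod 6, ∀ c : Fin 3, (κ = 1 ∨ κ = 5) → patI z = ∅ →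
    (c ∈ patI (z+κ) ∨ c ∈ patI (z-κ) ∨ c ∈ patO z) := by decide
lemma DEC3 : ∀ z : ZMod 6, (patO z).card + (patI z).card = 1 := by decide

section Sufficiency
variable [NeZero n] (hk1 : 1 ≤ k) (hk2 : 2 * k < n)

include hk1 hk2 in
lemma GP_sufficiency (h6 : n % 6 = 0) (hk6 : k % 6 = 1 ∨ k % 6 = 5) :
    ∃ f, IsKRDF (GP n k) 3 f ∧ rdfWeight f = n := by
  have hone : (1 : ZMod n) ≠ 0 := GP_one_ne hk1 hk2
  have hkne : (k : ZMod n) ≠ 0 := GP_k_ne hk1 hk2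
  have hdvd : (6:ℕ) ∣ n := by omega
  set φ := ZMod.castHom hdvd (ZMod 6) with hφ
  refine ⟨Sum.elim (fun i => patO (φ i)) (fun i => patI (φ i)), ?_, ?_⟩
  · intro v hv c
    rcases v with i | i
    · simp only [Sum.elim_inl] at hv
      rcases DEC1 (φ i) c hv with h | h | h
      · exact ⟨Sum.inl (i+1), (GP_adj_ll hone).2 (Or.inl rfl), by
          simpa only [Sum.elim_inl, map_add, map_one] using h⟩
      · exact ⟨Sum.inl (i-1), (GP_adj_ll hone).2 (Or.inr rfl), by
          simpa only [Sum.elim_inl, map_sub, map_one] using h⟩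
      · exact ⟨Sum.inr i, GP_adj_lr.2 rfl, by simpa only [Sum.elim_inr] using h⟩
    · simp only [Sum.elim_inr] at hv
      have hκ : ((k:ℕ) : ZMod 6) = 1 ∨ ((k:ℕ) : ZMod 6) = 5 := by
        rcases hk6 with h | h
        · left; rw [← ZMod.natCast_mod k 6, h]; rfl
        · right; rw [← ZMod.natCast_mod k 6, h]; rfl
      rcases DEC2 (φ i) ((k:ℕ) : ZMod 6) c hκ hv with h | h | h
      · exact ⟨Sum.inr (i+k), (GP_adj_rr hkne).2 (Or.inl rfl), by
          simpa only [Sum.elim_inr, map_add, map_natCast] using h⟩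
      · exact ⟨Sum.inr (i-k), (GP_adj_rr hkne).2 (Or.inr rfl), by
          simpa only [Sum.elim_inr, map_sub, map_natCast] using h⟩
      · exact ⟨Sum.inl i, GP_adj_rl.2 rfl, by simpa only [Sum.elim_inl] using h⟩
  · unfold rdfWeight
    rw [Fintype.sum_sum_type]
    simp only [Sum.elim_inl, Sum.elim_inr]
    rw [← Finset.sum_add_distrib]
    have : ∀ i : ZMod n, (patO (φ i)).card + (patI (φ i)).card = 1 := fun i => DEC3 (φ i)
    rw [Finset.sum_congr rfl (fun i _ => this i), Finset.sum_const, smul_eq_mul, mul_one,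
      Finset.card_univ, ZMod.card]

end Sufficiency

/-- Žerovnik's criterion: `GP(n,k)` with `1 ≤ k < n/2` is `3`-RDR iff
`n ≡ 0 (mod 6)` and `k ≡ ±1 (mod 6)`. -/
theorem GP_is3RDR_iff (n k : ℕ) [NeZero n] (hk1 : 1 ≤ k) (hk2 : 2 * k < n) :
    Is3RDR (GP n k) ↔ (n % 6 = 0 ∧ (k % 6 = 1 ∨ k % 6 = 5)) := by
  have hcard : Fintype.card (ZMod n ⊕ ZMod n) = 2 * n := by
    rw [Fintype.card_sum, ZMod.card]; ring
  constructor
  · rintro ⟨hreg, heq⟩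
    have huniv : IsKRDF (GP n k) 3 (fun _ => (Finset.univ : Finset (Fin 3))) := by
      intro v h c
      exfalso
      have h0 : (0 : Fin 3) ∈ (∅ : Finset (Fin 3)) := by
        rw [← h]; exact Finset.mem_univ _
      exact absurd h0 (Finset.notMem_empty _)
    have hSne : {w | ∃ f, IsKRDF (GP n k) 3 f ∧ rdfWeight f = w}.Nonempty :=
      ⟨_, _, huniv, rfl⟩
    have hmem := Nat.sInf_mem hSne
    obtain ⟨f, hf, hwf⟩ := hmem
    have hw : 2 * rdfWeight f = Fintype.card (ZMod n ⊕ ZMod n) := by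
      rw [hwf]; exact heq
    exact GP_necessity hk1 hk2 hf hw
  · rintro ⟨h6, hk6⟩
    obtain ⟨f, hf, hwf⟩ := GP_sufficiency hk1 hk2 h6 hk6
    refine ⟨GP_cubic hk1 hk2, ?_⟩
    have hmem : n ∈ {w | ∃ g, IsKRDF (GP n k) 3 g ∧ rdfWeight g = w} := ⟨f, hf, hwf⟩
    have hlow : ∀ w ∈ {w | ∃ g, IsKRDF (GP n k) 3 g ∧ rdfWeight g = w}, n ≤ w := by
      rintro w ⟨g, hg, rfl⟩
      have := rdf_lower (GP_cubic hk1 hk2) hg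
      omega
    have hrd : rainbowDomNum (GP n k) 3 = n :=
      le_antisymm (Nat.sInf_le hmem) (le_csInf ⟨n, hmem⟩ hlow)
    rw [hrd, hcard]
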